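/- ∫_0^1 (x^2 - x + 1/6) log Γ(x) dx = ζ(3)/(4π^2). -/

import Mathlib

open Real MeasureTheory intervalIntegral Set Filter Topology

-- log integrable on (0,1]
lemma logint : IntervalIntegrable Real.log volume 0 1 := by
  rw [intervalIntegrable_iff_integrableOn_Ioc_of_le zero_le_one]
  have h2 : IntegrableOn (fun x : ℝ => 2 * x ^ (-(1:ℝ)/2)) (Ioc 0 1) volume := by
    apply Integrable.const_mul
    rw [← IntegrableOn, ← intervalIntegrable_iff_integrableOn_Ioc_of_le zero_le_one]
    apply intervalIntegral.intervalIntegrable_rpow'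
    norm_num
  refine Integrable.mono h2 ?_ ?_
  · exact measurable_log.aestronglyMeasurable
  · filter_upwards [ae_restrict_mem measurableSet_Ioc] with x hx
    have hx0 : 0 < x := hx.1
    have hx1 : x ≤ 1 := hx.2
    have h1 : Real.log x ≤ 0 := Real.log_nonpos hx0.le hx1
    have h3 : -Real.log x ≤ 2 * x ^ (-(1:ℝ)/2) := by
      have := Real.log_le_sub_one_of_pos (x := x ^ (-(1:ℝ)/2)) (by positivity)
      rw [Real.log_rpow hx0] at this
      nlinarith [Real.rpow_nonneg hx0.le (-(1:ℝ)/2), this]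
    rw [Real.norm_eq_abs, Real.norm_eq_abs, abs_of_nonpos h1,
      abs_of_nonneg (by positivity : (0:ℝ) ≤ 2 * x ^ (-(1:ℝ)/2))]
    exact h3

lemma ident (n : ℕ) (t : ℝ) :
    Real.sin (2*(n+1)*t) * Real.cos t =
      Real.sin t * (Real.cos (2*(n+1)*t) + 1 + 2 * ∑ j ∈ Finset.range n, Real.cos (2*(j+1)*t)) := by
  induction n with
  | zero =>
    simp only [Finset.range_zero, Finset.sum_empty, Nat.cast_zero, zero_add, mul_zero, add_zero]
    rw [show (2:ℝ)*1*t = 2*t by ring, Real.sin_two_mul, Real.cos_two_mul]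
    ring
  | succ n ih =>
    rw [Finset.sum_range_succ]
    push_cast
    rw [show (2:ℝ)*((n:ℝ)+1+1)*t = 2*((n:ℝ)+1)*t + 2*t by ring, Real.sin_add, Real.cos_add,
      Real.sin_two_mul, Real.cos_two_mul]
    push_cast at ih
    linear_combination ih + 2*Real.sin (2*((n:ℝ)+1)*t)*Real.cos t * (Real.sin_sq_add_cos_sq t)

lemma sin_lb {x : ℝ} (hx : x ∈ Set.Icc (0:ℝ) 1) : 2*x*(1-x) ≤ Real.sin (π * x) := by
  obtain ⟨hx0, hx1⟩ := hx
  rcases le_or_gt x (1/2) with h | h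
  · calc 2*x*(1-x) ≤ 2*x := by nlinarith
    _ = 2/π * (π * x) := by field_simp
    _ ≤ Real.sin (π * x) := Real.mul_le_sin (by positivity)
        (by nlinarith [Real.pi_pos])
  · have : Real.sin (π * x) = Real.sin (π * (1 - x)) := by
      rw [show π * (1-x) = π - π * x by ring, Real.sin_pi_sub]
    rw [this]
    calc 2*x*(1-x) ≤ 2*(1-x) := by nlinarith
    _ = 2/π * (π * (1-x)) := by field_simp
    _ ≤ Real.sin (π * (1-x)) := Real.mul_le_sin (by nlinarith [Real.pi_pos])
        (by nlinarith [Real.pi_pos])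

lemma Lint : IntervalIntegrable (fun x => Real.log (2 * Real.sin (π * x))) volume 0 1 := by
  have hg : IntervalIntegrable
      (fun x => Real.log 2 + Real.log 4 + (|Real.log x| + |Real.log (1 - x)|)) volume 0 1 := by
    apply IntervalIntegrable.add (intervalIntegrable_const)
    have h1 : IntervalIntegrable (fun x => |Real.log (1-x)|) volume 0 1 := by
      simpa using (logint.comp_sub_left 1).abs.symm
    exact logint.abs.add h1
  refine hg.mono_fun ?_ ?_
  · exact (Real.measurable_log.comp ((measurable_const.mul
      (Real.measurable_sin.comp (measurable_const.mul measurable_id)))) ).aestronglyMeasurable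
  · rw [Set.uIoc_of_le zero_le_one]
    filter_upwards [ae_restrict_mem measurableSet_Ioc] with x hx
    obtain ⟨hx0, hx1⟩ := hx
    have h1x : 0 ≤ 1 - x := by linarith
    have hs : 2*x*(1-x) ≤ Real.sin (π * x) := sin_lb ⟨hx0.le, hx1⟩
    rcases eq_or_lt_of_le hx1 with rfl | hx1'
    · simp [Real.log_nonneg, abs_nonneg]
    have hpos : 0 < 4 * (x * (1 - x)) := by nlinarith
    have hlow : Real.log 4 + (Real.log x + Real.log (1-x)) ≤ Real.log (2 * Real.sin (π * x)) := by
      have hxx : (0:ℝ) < 1 - x := by linarith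
      rw [← Real.log_mul hx0.ne' hxx.ne',
        ← Real.log_mul (by norm_num : (4:ℝ) ≠ 0) (by positivity)]
      apply Real.log_le_log (by nlinarith)
      nlinarith
    have hup : Real.log (2 * Real.sin (π * x)) ≤ Real.log 2 := by
      apply Real.log_le_log (by nlinarith)
      nlinarith [Real.sin_le_one (π * x)]
    rw [Real.norm_eq_abs, Real.norm_eq_abs]
    have h2 : (0:ℝ) ≤ Real.log 2 := Real.log_nonneg one_le_two
    have h4 : (0:ℝ) ≤ Real.log 4 := Real.log_nonneg (by norm_num)
    have key : |Real.log (2 * Real.sin (π * x))| ≤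
        Real.log 2 + Real.log 4 + (|Real.log x| + |Real.log (1 - x)|) := by
      rw [abs_le]
      constructor
      · nlinarith [neg_abs_le (Real.log x), neg_abs_le (Real.log (1-x))]
      · nlinarith [abs_nonneg (Real.log x), abs_nonneg (Real.log (1-x))]
    exact key.trans (le_abs_self _)

lemma helper1 (c a : ℝ) (hsa : Real.sin (c*a) = 0) :
    Tendsto (fun x => Real.sin (c*x)/(x - a)) (𝓝[≠] a) (𝓝 (c * Real.cos (c*a))) := by
  have hd : HasDerivAt (fun x => Real.sin (c*x)) (Real.cos (c*a) * c) a := by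
    exact ((Real.hasDerivAt_sin (c*a)).comp a ((hasDerivAt_id a).const_mul c)).congr_deriv (by simp)
  have := hasDerivAt_iff_tendsto_slope.mp hd
  rw [show Real.cos (c*a) * c = c * Real.cos (c*a) by ring] at this
  refine this.congr (fun x => ?_)
  simp [slope, hsa, div_eq_inv_mul]

lemma helper2 : Tendsto (fun y => y * Real.log (2*y)) (𝓝[>] (0:ℝ)) (𝓝 0) := by
  have h1 : Tendsto (fun y : ℝ => Real.log y * y + Real.log 2 * y) (𝓝[>] (0:ℝ)) (𝓝 0) := by
    have h2 := tendsto_log_mul_rpow_nhdsGT_zero one_pos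
    simp only [Real.rpow_one] at h2
    have h3 : Tendsto (fun y : ℝ => Real.log 2 * y) (𝓝[>] (0:ℝ)) (𝓝 0) := by
      have hc : Continuous (fun y : ℝ => Real.log 2 * y) := continuous_const.mul continuous_id
      simpa using (hc.tendsto (0:ℝ)).mono_left nhdsWithin_le_nhds
    simpa using h2.add h3
  refine h1.congr' ?_
  filter_upwards [self_mem_nhdsWithin] with y hy
  rw [Real.log_mul two_ne_zero (ne_of_gt hy)]
  ring

lemma helper3 {a : ℝ} (ha : Real.sin (π*a) = 0) :
    Tendsto (fun x => Real.sin (π*x) * Real.log (2*Real.sin (π*x))) (𝓝[Set.Ioo (0:ℝ) 1] a) (𝓝 0) := by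
  have hs : Tendsto (fun x => Real.sin (π*x)) (𝓝[Set.Ioo (0:ℝ) 1] a) (𝓝[>] (0:ℝ)) := by
    rw [tendsto_nhdsWithin_iff]
    constructor
    · have hc : Continuous fun x : ℝ => Real.sin (π*x) := by continuity
      simpa [ha] using (hc.tendsto a).mono_left nhdsWithin_le_nhds
    · filter_upwards [self_mem_nhdsWithin] with x hx
      exact Real.sin_pos_of_pos_of_lt_pi (by nlinarith [hx.1, Real.pi_pos])
        (by nlinarith [hx.2, Real.pi_pos])
  exact helper2.comp hs

lemma hds (c x : ℝ) : HasDerivAt (fun x => Real.sin (c*x)) (c * Real.cos (c*x)) x := by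
  have := (Real.hasDerivAt_sin (c*x)).comp x ((hasDerivAt_id x).const_mul c)
  exact this.congr_deriv (by ring)

lemma endlimit (c : ℝ) {a : ℝ} (ha : a = 0 ∨ a = 1) (hca : Real.sin (c*a) = 0) :
    Tendsto (fun x => Real.sin (c*x) * Real.log (2*Real.sin (π*x)))
      (𝓝[Set.Ioo (0:ℝ) 1] a) (𝓝 0) := by
  have hπa : Real.sin (π*a) = 0 := by
    rcases ha with rfl|rfl
    · simp
    · simp [Real.sin_pi]
  have hcos : π * Real.cos (π*a) ≠ 0 := by
    rcases ha with rfl|rfl <;> simp [Real.pi_ne_zero, Real.cos_pi]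
  have hsub : Set.Ioo (0:ℝ) 1 ⊆ {a}ᶜ := by
    rcases ha with rfl|rfl
    · exact fun x hx => hx.1.ne'
    · exact fun x hx => hx.2.ne
  have h1 : Tendsto (fun x => Real.sin (c*x)/(x-a)) (𝓝[Set.Ioo (0:ℝ) 1] a)
      (𝓝 (c*Real.cos (c*a))) :=
    (helper1 c a hca).mono_left (nhdsWithin_mono _ hsub)
  have h2 : Tendsto (fun x => (x-a)/Real.sin (π*x)) (𝓝[Set.Ioo (0:ℝ) 1] a)
      (𝓝 (π*Real.cos (π*a))⁻¹) := by
    have := (((helper1 π a hπa).mono_left (nhdsWithin_mono _ hsub)).inv₀ hcos)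
    refine this.congr (fun x => ?_)
    rw [inv_div]
  have h3 := helper3 hπa
  have h4 := (h1.mul h2).mul h3
  rw [mul_zero] at h4
  refine h4.congr' ?_
  filter_upwards [self_mem_nhdsWithin] with x hx
  have hxa : x - a ≠ 0 := sub_ne_zero.2 (fun h => hsub hx (by simp [h]))
  have hsx : Real.sin (π*x) ≠ 0 :=
    (Real.sin_pos_of_pos_of_lt_pi (by nlinarith [hx.1, Real.pi_pos])
      (by nlinarith [hx.2, Real.pi_pos])).ne'
  rw [mul_comm π x] at hsx
  field_simp

lemma sin_nat_two_pi (k : ℕ) (y : ℝ) (hy : y = 2*π*((k:ℝ)+1)*1) : Real.sin y = 0 := by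
  have : y = ((2*(k+1) : ℕ) : ℝ) * π := by push_cast; rw [hy]; ring
  rw [this, Real.sin_nat_mul_pi]

lemma In (n : ℕ) :
    ∫ x in (0:ℝ)..1, Real.cos (2*π*((n:ℝ)+1)*x) * Real.log (2 * Real.sin (π*x))
      = -1/(2*((n:ℝ)+1)) := by
  have hN : (0:ℝ) < (n:ℝ)+1 := by positivity
  have hc : (2*π*((n:ℝ)+1)) ≠ 0 := by positivity
  set g : ℝ → ℝ := fun x =>
      Real.sin (2*π*((n:ℝ)+1)*x) * Real.log (2*Real.sin (π*x)) / (2*π*((n:ℝ)+1))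
      - (1/(2*((n:ℝ)+1))) * (Real.sin (2*π*((n:ℝ)+1)*x)/(2*π*((n:ℝ)+1)) + x
          + 2*∑ j ∈ Finset.range n, Real.sin (2*π*((j:ℝ)+1)*x)/(2*π*((j:ℝ)+1))) with hg
  have key : ∫ x in (0:ℝ)..1, Real.cos (2*π*((n:ℝ)+1)*x) * Real.log (2 * Real.sin (π*x))
      = g 1 - g 0 := by
    apply integral_eq_sub_of_hasDerivAt_of_le zero_le_one
    · -- continuity
      have hA : ContinuousOn
          (fun x => Real.sin (2*π*((n:ℝ)+1)*x) * Real.log (2*Real.sin (π*x))) (Icc 0 1) := by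
        intro x hx
        rcases eq_or_lt_of_le hx.1 with h0 | h0
        · -- x = 0
          rw [← h0]
          rw [← continuousWithinAt_diff_self]
          have hset : 𝓝[Icc (0:ℝ) 1 \ {0}] 0 = 𝓝[Ioo (0:ℝ) 1] 0 := by
            apply nhdsWithin_eq_nhdsWithin' (Iio_mem_nhds one_pos)
            ext y; constructor
            · rintro ⟨⟨⟨h1, h2⟩, h3⟩, h4⟩
              exact ⟨⟨lt_of_le_of_ne h1 (Ne.symm (by simpa using h3)), h4⟩, h4⟩
            · rintro ⟨⟨h1, h2⟩, h4⟩
              exact ⟨⟨⟨h1.le, h2.le⟩, by simp [h1.ne']⟩, h4⟩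
          unfold ContinuousWithinAt
          rw [hset]
          simpa using endlimit (2*π*((n:ℝ)+1)) (Or.inl rfl) (by simp)
        rcases eq_or_lt_of_le hx.2 with h1 | h1
        · -- x = 1
          rw [h1]
          rw [← continuousWithinAt_diff_self]
          have hset : 𝓝[Icc (0:ℝ) 1 \ {1}] 1 = 𝓝[Ioo (0:ℝ) 1] 1 := by
            apply nhdsWithin_eq_nhdsWithin' (Ioi_mem_nhds one_pos)
            ext y; constructor
            · rintro ⟨⟨⟨ha1, ha2⟩, h3⟩, h4⟩
              exact ⟨⟨h4, lt_of_le_of_ne ha2 (by simpa using h3)⟩, h4⟩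
            · rintro ⟨⟨ha1, ha2⟩, h4⟩
              exact ⟨⟨⟨ha1.le, ha2.le⟩, by simp [ha2.ne]⟩, h4⟩
          unfold ContinuousWithinAt
          rw [hset]
          have hs1 : Real.sin (2*π*((n:ℝ)+1)*1) = 0 := sin_nat_two_pi n _ rfl
          simp only [hs1, zero_mul]
          exact endlimit (2*π*((n:ℝ)+1)) (Or.inr rfl) hs1
        · -- interior
          have hsx : 0 < Real.sin (π*x) :=
            Real.sin_pos_of_pos_of_lt_pi (by nlinarith [Real.pi_pos])
              (by nlinarith [Real.pi_pos])
          apply ContinuousAt.continuousWithinAt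
          apply ContinuousAt.mul
          · exact (Real.continuous_sin.comp (continuous_const.mul continuous_id)).continuousAt
          · apply ContinuousAt.comp (Real.continuousAt_log (by positivity))
            exact (continuous_const.mul
              (Real.continuous_sin.comp (continuous_const.mul continuous_id))).continuousAt
      have hB : Continuous (fun x : ℝ => Real.sin (2*π*((n:ℝ)+1)*x)/(2*π*((n:ℝ)+1)) + x
          + 2*∑ j ∈ Finset.range n, Real.sin (2*π*((j:ℝ)+1)*x)/(2*π*((j:ℝ)+1))) := by
        apply Continuous.add
        apply Continuous.add
        · exact (Real.continuous_sin.comp (continuous_const.mul continuous_id)).div_const _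
        · exact continuous_id
        · refine continuous_const.mul (continuous_finset_sum _ (fun j _ => ?_))
          exact (Real.continuous_sin.comp (continuous_const.mul continuous_id)).div_const _
      exact (hA.div_const _).sub ((continuous_const.mul hB).continuousOn)
    · -- derivative
      intro x hx
      have hsx : 0 < Real.sin (π*x) :=
        Real.sin_pos_of_pos_of_lt_pi (by nlinarith [hx.1, Real.pi_pos])
          (by nlinarith [hx.2, Real.pi_pos])
      have hlog : HasDerivAt (fun x => Real.log (2*Real.sin (π*x)))
          ((2*(π * Real.cos (π*x)))/(2*Real.sin (π*x))) x :=
        HasDerivAt.log ((hds π x).const_mul 2) (by positivity)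
      have hA := ((hds (2*π*((n:ℝ)+1)) x).mul hlog).div_const (2*π*((n:ℝ)+1))
      have hsum : HasDerivAt
          (fun x => ∑ j ∈ Finset.range n, Real.sin (2*π*((j:ℝ)+1)*x)/(2*π*((j:ℝ)+1)))
          (∑ j ∈ Finset.range n, Real.cos (2*π*((j:ℝ)+1)*x)) x := by
        apply HasDerivAt.fun_sum
        intro j _
        have hcj : (2*π*((j:ℝ)+1)) ≠ 0 := by positivity
        have h := (hds (2*π*((j:ℝ)+1)) x).div_const (2*π*((j:ℝ)+1))
        rwa [mul_div_cancel_left₀ _ hcj] at h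
      have hB := (((hds (2*π*((n:ℝ)+1)) x).div_const (2*π*((n:ℝ)+1))).add
          (hasDerivAt_id x)).add (hsum.const_mul 2)
      have hgd := hA.sub ((hB).const_mul (1/(2*((n:ℝ)+1))))
      convert hgd using 1
      · rw [hg]; rfl
      have hid : Real.sin (2*π*((n:ℝ)+1)*x) * Real.cos (π*x)
          = Real.sin (π*x) * (Real.cos (2*π*((n:ℝ)+1)*x) + 1
              + 2*∑ j ∈ Finset.range n, Real.cos (2*π*((j:ℝ)+1)*x)) := by
        have h := ident n (π*x)
        have e1 : 2*((n:ℝ)+1)*(π*x) = 2*π*((n:ℝ)+1)*x := by ring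
        have e2 : ∑ j ∈ Finset.range n, Real.cos (2*((j:ℝ)+1)*(π*x))
            = ∑ j ∈ Finset.range n, Real.cos (2*π*((j:ℝ)+1)*x) :=
          Finset.sum_congr rfl (fun j _ => by
            rw [show (2:ℝ)*((j:ℝ)+1)*(π*x) = 2*π*((j:ℝ)+1)*x by ring])
        rw [e1, e2] at h
        exact h
      field_simp
      simp only [show ∀ j : ℕ, 2*π*x*((j:ℝ)+1) = 2*π*((j:ℝ)+1)*x from fun j => by ring]
      linear_combination (-1:ℝ) * hid
    · -- integrability
      rw [intervalIntegrable_iff_integrableOn_Ioc_of_le zero_le_one]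
      have hL : IntegrableOn (fun x => Real.log (2 * Real.sin (π*x))) (Ioc 0 1) volume := by
        rw [← intervalIntegrable_iff_integrableOn_Ioc_of_le zero_le_one]; exact Lint
      refine Integrable.bdd_mul (c := 1) hL ?_ ?_
      · exact (Real.continuous_cos.comp (continuous_const.mul continuous_id)).aestronglyMeasurable
      · filter_upwards with x
        rw [Real.norm_eq_abs]
        exact Real.abs_cos_le_one _
  have h1' : Real.sin (2*π*((n:ℝ)+1)) = 0 := sin_nat_two_pi n _ (by ring)
  have hj' : ∀ j ∈ Finset.range n, Real.sin (2*π*((j:ℝ)+1))/(2*π*((j:ℝ)+1)) = 0 :=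
    fun j _ => by rw [sin_nat_two_pi j _ (by ring), zero_div]
  rw [key, hg]
  simp only [mul_one, mul_zero, zero_mul, Real.sin_zero, zero_div, zero_add, add_zero, h1']
  rw [Finset.sum_congr rfl hj']
  simp only [Finset.sum_const_zero]
  ring

lemma b2eval (x : ℝ) :
    (Polynomial.map (algebraMap ℚ ℝ) (Polynomial.bernoulli 2)).eval x = x^2 - x + 1/6 := by
  simp [Polynomial.bernoulli, Finset.sum_range_succ, bernoulli_zero, bernoulli_one,
    Polynomial.eval_monomial]
  ring

lemma b2sum {x : ℝ} (hx : x ∈ Set.Icc (0:ℝ) 1) :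
    HasSum (fun m : ℕ => 1/(π^2*(m:ℝ)^2) * Real.cos (2*π*m*x)) (x^2 - x + 1/6) := by
  have h := hasSum_one_div_nat_pow_mul_cos (k := 1) one_ne_zero hx
  rw [b2eval] at h
  have h2 := h.div_const (π^2)
  have e : ((-1:ℝ))^(1+1) * (2*π)^(2*1)/2/((2*1).factorial : ℝ) * (x^2-x+1/6) / π^2
      = x^2-x+1/6 := by
    have h3 : (((2*1).factorial : ℕ) : ℝ) = 2 := by norm_num [Nat.factorial]
    rw [h3]
    field_simp
    ring
  rw [e] at h2
  refine h2.congr_fun (fun m => ?_)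
  rw [pow_mul]
  field_simp

lemma Jval : ∫ x in (0:ℝ)..1, (x^2 - x + 1/6) * Real.log (2*Real.sin (π*x))
    = -(1/(2*π^2)) * ∑' m : ℕ, 1/((m:ℝ)+1)^3 := by
  set μ := volume.restrict (Set.Ioc (0:ℝ) 1) with hμ
  set L : ℝ → ℝ := fun x => Real.log (2*Real.sin (π*x)) with hLdef
  set F : ℕ → ℝ → ℝ := fun m x => (1/(π^2*(m:ℝ)^2) * Real.cos (2*π*m*x)) * L x with hF
  have hLint : Integrable L μ := by
    rw [hμ, ← IntegrableOn, ← intervalIntegrable_iff_integrableOn_Ioc_of_le zero_le_one]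
    exact Lint
  have hcoef : ∀ m : ℕ, (0:ℝ) ≤ 1/(π^2*(m:ℝ)^2) := fun m => by positivity
  have hFint : ∀ m : ℕ, Integrable (F m) μ := by
    intro m
    refine Integrable.bdd_mul (c := 1/(π^2*(m:ℝ)^2)) hLint ?_ ?_
    · exact (continuous_const.mul
        (Real.continuous_cos.comp (continuous_const.mul continuous_id))).aestronglyMeasurable
    · filter_upwards with x
      rw [Real.norm_eq_abs, abs_mul, abs_of_nonneg (hcoef m)]
      nlinarith [Real.abs_cos_le_one (2*π*(m:ℝ)*x), abs_nonneg (Real.cos (2*π*(m:ℝ)*x)), hcoef m]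
  have hnormsum : Summable (fun m => ∫ x, ‖F m x‖ ∂μ) := by
    have hs2 : Summable (fun m : ℕ => 1/(π^2*(m:ℝ)^2) * ∫ x, ‖L x‖ ∂μ) := by
      apply Summable.mul_right
      have := (Real.summable_one_div_nat_pow (p := 2)).mpr one_lt_two
      refine (this.mul_left (1/π^2)).congr (fun m => ?_)
      field_simp
    refine Summable.of_nonneg_of_le (fun m => integral_nonneg (fun x => norm_nonneg _))
      (fun m => ?_) hs2
    have h1 : ∀ x, ‖F m x‖ ≤ 1/(π^2*(m:ℝ)^2) * ‖L x‖ := by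
      intro x
      rw [hF]
      simp only [Real.norm_eq_abs, abs_mul]
      rw [abs_of_nonneg (hcoef m)]
      exact mul_le_mul_of_nonneg_right
        (mul_le_of_le_one_right (hcoef m) (Real.abs_cos_le_one _)) (abs_nonneg (L x))
    calc ∫ x, ‖F m x‖ ∂μ ≤ ∫ x, 1/(π^2*(m:ℝ)^2) * ‖L x‖ ∂μ :=
          integral_mono (hFint m).norm (hLint.norm.const_mul _) h1
    _ = 1/(π^2*(m:ℝ)^2) * ∫ x, ‖L x‖ ∂μ := MeasureTheory.integral_const_mul _ _
  have HS : HasSum (fun m => ∫ x, F m x ∂μ) (∫ x, (∑' m, F m x) ∂μ) :=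
    hasSum_integral_of_summable_integral_norm hFint hnormsum
  have hpt : (∫ x, (∑' m, F m x) ∂μ) = ∫ x in (0:ℝ)..1, (x^2 - x + 1/6) * L x := by
    rw [intervalIntegral.integral_of_le zero_le_one, hμ]
    apply setIntegral_congr_fun measurableSet_Ioc
    intro x hx
    exact ((b2sum ⟨hx.1.le, hx.2⟩).mul_right (L x)).tsum_eq
  have hF0 : (∫ x, F 0 x ∂μ) = 0 := by
    have : F 0 = fun x => 0 := by
      funext x; rw [hF]; norm_num
    rw [this]
    exact MeasureTheory.integral_zero _ _
  have hIm : ∀ m : ℕ, (∫ x, F (m+1) x ∂μ) = -(1/(2*π^2)) * (1/((m:ℝ)+1)^3) := by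
    intro m
    have e1 : (∫ x, F (m+1) x ∂μ)
        = (1/(π^2*((m:ℝ)+1)^2)) * ∫ x, Real.cos (2*π*((m:ℝ)+1)*x) * L x ∂μ := by
      rw [← MeasureTheory.integral_const_mul]
      apply MeasureTheory.integral_congr_ae
      filter_upwards with x
      rw [hF]
      push_cast
      ring
    have e2 : (∫ x, Real.cos (2*π*((m:ℝ)+1)*x) * L x ∂μ) = -1/(2*((m:ℝ)+1)) := by
      rw [hμ, ← intervalIntegral.integral_of_le zero_le_one]
      exact In m
    rw [e1, e2]
    have hm : ((m:ℝ)+1) ≠ 0 := by positivity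
    field_simp
  have HS1 : HasSum (fun m => ∫ x, F (m+1) x ∂μ) (∫ x, (∑' m, F m x) ∂μ) := by
    refine (hasSum_nat_add_iff (f := fun m => ∫ x, F m x ∂μ) 1).mpr ?_
    simpa [hF0] using HS
  simp only [hIm] at HS1
  have hz : Summable (fun m : ℕ => 1/((m:ℝ)+1)^3) := by
    have := (Real.summable_one_div_nat_pow (p := 3)).mpr (by norm_num)
    refine ((summable_nat_add_iff 1).mpr this).congr (fun m => ?_)
    push_cast
    ring
  have HS2 : HasSum (fun m : ℕ => -(1/(2*π^2)) * (1/((m:ℝ)+1)^3))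
      (-(1/(2*π^2)) * ∑' m : ℕ, 1/((m:ℝ)+1)^3) := hz.hasSum.mul_left _
  rw [← hpt]
  exact HS1.unique HS2

lemma zeta3 : (riemannZeta 3).re = ∑' m : ℕ, 1/((m:ℝ)+1)^3 := by
  have h := zeta_eq_tsum_one_div_nat_add_one_cpow (s := 3) (by norm_num)
  have e : ∀ n : ℕ, (1:ℂ)/((n:ℂ)+1)^(3:ℂ) = ((1/((n:ℝ)+1)^3 : ℝ) : ℂ) := by
    intro n
    rw [show ((3:ℂ)) = ((3:ℕ):ℂ) by norm_num, Complex.cpow_natCast]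
    push_cast
    ring
  rw [h, tsum_congr e, ← Complex.ofReal_tsum]
  exact Complex.ofReal_re _

lemma B2zero : ∫ x in (0:ℝ)..1, (x^2 - x + 1/6) = 0 := by
  have h1 : IntervalIntegrable (fun x : ℝ => x^2 - x) volume 0 1 :=
    ((intervalIntegral.intervalIntegrable_pow 2).sub intervalIntegral.intervalIntegrable_id)
  rw [intervalIntegral.integral_add h1 intervalIntegrable_const,
    intervalIntegral.integral_sub (intervalIntegral.intervalIntegrable_pow 2)
      intervalIntegral.intervalIntegrable_id]
  simp [integral_pow, integral_id]
  norm_num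

lemma B2Lint : IntervalIntegrable (fun x => (x^2-x+1/6) * Real.log (2*Real.sin (π*x)))
    volume 0 1 := by
  rw [intervalIntegrable_iff_integrableOn_Ioc_of_le zero_le_one]
  have hL : IntegrableOn (fun x => Real.log (2 * Real.sin (π*x))) (Ioc 0 1) volume := by
    rw [← intervalIntegrable_iff_integrableOn_Ioc_of_le zero_le_one]; exact Lint
  refine Integrable.bdd_mul (c := 3) hL ?_ ?_
  · exact (Continuous.aestronglyMeasurable (by continuity))
  · filter_upwards [ae_restrict_mem measurableSet_Ioc] with x hx
    rw [Real.norm_eq_abs]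
    rw [abs_le]
    constructor <;> nlinarith [hx.1, hx.2, sq_nonneg x, sq_nonneg (x-1)]

lemma B2logGammaInt : IntervalIntegrable (fun x => (x^2-x+1/6) * Real.log (Real.Gamma x))
    volume 0 1 := by
  rw [intervalIntegrable_iff_integrableOn_Ioc_of_le zero_le_one]
  have h1 : IntegrableOn (fun x => (x^2-x+1/6) * Real.log (Real.Gamma (x+1)))
      (Ioc 0 1) volume := by
    apply IntegrableOn.mono_set _ Ioc_subset_Icc_self
    apply ContinuousOn.integrableOn_Icc
    apply ContinuousOn.mul (by fun_prop)
    intro x hx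
    have hpos : 0 < Real.Gamma (x+1) := Real.Gamma_pos_of_pos (by linarith [hx.1])
    apply ContinuousAt.continuousWithinAt
    have h4 : DifferentiableAt ℝ (fun x : ℝ => Real.Gamma (x+1)) x :=
      (Real.differentiableAt_Gamma (fun m => by
        have h5 := hx.1; have h6 : (0:ℝ) ≤ m := Nat.cast_nonneg m; intro h; nlinarith)).comp x
        ((differentiable_id.add_const 1).differentiableAt)
    exact h4.continuousAt.log hpos.ne'
  have h2 : IntegrableOn (fun x => (x^2-x+1/6) * Real.log x) (Ioc 0 1) volume := by
    have hL : IntegrableOn Real.log (Ioc 0 1) volume := by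
      rw [← intervalIntegrable_iff_integrableOn_Ioc_of_le zero_le_one]; exact logint
    refine Integrable.bdd_mul (c := 3) hL (Continuous.aestronglyMeasurable (by continuity)) ?_
    filter_upwards [ae_restrict_mem measurableSet_Ioc] with x hx
    rw [Real.norm_eq_abs, abs_le]
    constructor <;> nlinarith [hx.1, hx.2, sq_nonneg x, sq_nonneg (x-1)]
  have h3 : IntegrableOn
      (fun x => (x^2-x+1/6) * Real.log (Real.Gamma (x+1)) - (x^2-x+1/6) * Real.log x)
      (Ioc 0 1) volume := h1.sub h2
  refine h3.congr_fun ?_ measurableSet_Ioc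
  intro x hx
  have hx0 : 0 < x := hx.1
  have hΓ : Real.Gamma (x+1) = x * Real.Gamma x := Real.Gamma_add_one hx0.ne'
  have hΓpos : 0 < Real.Gamma x := Real.Gamma_pos_of_pos hx0
  simp only
  rw [hΓ, Real.log_mul hx0.ne' hΓpos.ne']
  ring

theorem stmt_18 :
    ∫ x in (0:ℝ)..1, (x ^ 2 - x + 1/6) * Real.log (Real.Gamma x) =
      (riemannZeta 3).re / (4 * Real.pi ^ 2) := by
  have hrev : ∫ x in (0:ℝ)..1, (x^2-x+1/6) * Real.log (Real.Gamma (1-x))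
      = ∫ x in (0:ℝ)..1, (x^2-x+1/6) * Real.log (Real.Gamma x) := by
    have h := intervalIntegral.integral_comp_sub_left
      (a := 0) (b := 1) (fun y => (y^2-y+1/6) * Real.log (Real.Gamma y)) 1
    norm_num at h
    rw [← h]
    apply intervalIntegral.integral_congr
    intro x hx
    simp only
    congr 1
    ring
  have hint2 : IntervalIntegrable (fun x => (x^2-x+1/6) * Real.log (Real.Gamma (1-x)))
      volume 0 1 := by
    have h := (B2logGammaInt.comp_sub_left 1).symm
    have h2 : IntervalIntegrable
        (fun x => ((1-x)^2-(1-x)+1/6) * Real.log (Real.Gamma (1-x))) volume 0 1 := by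
      simpa using h
    have e : (fun x => ((1-x)^2-(1-x)+1/6) * Real.log (Real.Gamma (1-x)))
        = (fun x => (x^2-x+1/6) * Real.log (Real.Gamma (1-x))) := by
      funext x; congr 1; ring
    rwa [e] at h2
  have key : (2:ℝ) * ∫ x in (0:ℝ)..1, (x^2-x+1/6) * Real.log (Real.Gamma x)
      = ∫ x in (0:ℝ)..1, ((x^2-x+1/6) * Real.log (Real.Gamma x)
          + (x^2-x+1/6) * Real.log (Real.Gamma (1-x))) := by
    rw [intervalIntegral.integral_add B2logGammaInt hint2, hrev]; ring
  have hae : ∫ x in (0:ℝ)..1, ((x^2-x+1/6) * Real.log (Real.Gamma x)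
          + (x^2-x+1/6) * Real.log (Real.Gamma (1-x)))
      = ∫ x in (0:ℝ)..1, ((x^2-x+1/6) * (Real.log π + Real.log 2)
          - (x^2-x+1/6) * Real.log (2*Real.sin (π*x))) := by
    apply intervalIntegral.integral_congr_ae
    have h1 : ∀ᵐ x : ℝ ∂volume, x ≠ 1 := by
      filter_upwards [compl_mem_ae_iff.mpr (Real.volume_singleton (a := (1:ℝ)))] with x hx
      simpa using hx
    filter_upwards [h1] with x hx1 hx
    rw [Set.uIoc_of_le zero_le_one] at hx
    have hx0 : 0 < x := hx.1
    have hxlt : x < 1 := lt_of_le_of_ne hx.2 hx1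
    have hΓx : 0 < Real.Gamma x := Real.Gamma_pos_of_pos hx0
    have hΓ1x : 0 < Real.Gamma (1-x) := Real.Gamma_pos_of_pos (by linarith)
    have hs : 0 < Real.sin (π*x) :=
      Real.sin_pos_of_pos_of_lt_pi (by positivity) (by nlinarith [Real.pi_pos])
    have hre := Real.Gamma_mul_Gamma_one_sub x
    have hlog : Real.log (Real.Gamma x) + Real.log (Real.Gamma (1-x))
        = Real.log π - Real.log (Real.sin (π*x)) := by
      rw [← Real.log_mul hΓx.ne' hΓ1x.ne', hre, Real.log_div Real.pi_pos.ne' hs.ne']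
    have hlog2 : Real.log (2*Real.sin (π*x)) = Real.log 2 + Real.log (Real.sin (π*x)) :=
      Real.log_mul two_ne_zero hs.ne'
    linear_combination (x^2-x+1/6)*hlog + (x^2-x+1/6)*hlog2
  have hsplit : ∫ x in (0:ℝ)..1, ((x^2-x+1/6) * (Real.log π + Real.log 2)
          - (x^2-x+1/6) * Real.log (2*Real.sin (π*x)))
      = - ∫ x in (0:ℝ)..1, (x^2-x+1/6) * Real.log (2*Real.sin (π*x)) := by
    have hcont : IntervalIntegrable (fun x => (x^2-x+1/6) * (Real.log π + Real.log 2))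
        volume 0 1 := (Continuous.intervalIntegrable (by continuity) _ _)
    rw [intervalIntegral.integral_sub hcont B2Lint,
      intervalIntegral.integral_mul_const, B2zero, zero_mul, zero_sub]
  have hπ : (π:ℝ) ≠ 0 := Real.pi_ne_zero
  rw [zeta3]
  have hJ := Jval
  have h2 := key.trans (hae.trans hsplit)
  rw [hJ] at h2
  rw [eq_div_iff (by positivity)]
  have h3 : (1/(2*π^2)) * (2*π^2) = 1 := by field_simp
  linear_combination (2*π^2) * h2 + (∑' m : ℕ, 1/((m:ℝ)+1)^3) * h3
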